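/- Suppose g^{μν} p_μ p_ν = ε m² identically on ℝ⁴ for some constants ε, m. Then the vector field p^α satisfies p^α_{;β} p^β = q g^{αγ} F_{γβ} p^β for every α, i.e. (∂_β p^α + Γ^α_{βγ} p^γ) p^β = q g^{αγ} F_{γβ} p^β. -/

import Mathlib

open scoped BigOperators

/-- Partial derivative in the μ-th coordinate direction. -/
noncomputable def pd {ι : Type*} [Fintype ι] [DecidableEq ι] {F : Type*}
    [NormedAddCommGroup F] [NormedSpace ℝ F]
    (f : (ι → ℝ) → F) (μ : ι) (x : ι → ℝ) : F :=
  fderiv ℝ f x (Pi.single μ 1)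

/-- Christoffel symbols Γ[h]^l_{μν} of a matrix field `h`. -/
noncomputable def Chr {ι : Type*} [Fintype ι] [DecidableEq ι]
    (h : (ι → ℝ) → Matrix ι ι ℝ) (l μ ν : ι) (x : ι → ℝ) : ℝ :=
  (1/2) * ∑ ρ : ι, (h x)⁻¹ l ρ *
    (pd (fun z => h z ρ ν) μ x + pd (fun z => h z ρ μ) ν x - pd (fun z => h z μ ν) ρ x)

/-- Electromagnetic field tensor F_{μν} = ∂_μ A_ν − ∂_ν A_μ. -/
noncomputable def Fem (A : (Fin 4 → ℝ) → Fin 4 → ℝ) (μ ν : Fin 4) (x : Fin 4 → ℝ) : ℝ :=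
  pd (fun z => A z ν) μ x - pd (fun z => A z μ) ν x

/-- Kinematical momentum p_μ = ∂_μ S − q A_μ. -/
noncomputable def pDown (S : (Fin 4 → ℝ) → ℝ) (A : (Fin 4 → ℝ) → Fin 4 → ℝ) (q : ℝ)
    (μ : Fin 4) (x : Fin 4 → ℝ) : ℝ :=
  pd S μ x - q * A x μ

/-- Kinematical momentum with index raised: p^μ = g^{μν} p_ν. -/
noncomputable def pUp (g : (Fin 4 → ℝ) → Matrix (Fin 4) (Fin 4) ℝ)
    (S : (Fin 4 → ℝ) → ℝ) (A : (Fin 4 → ℝ) → Fin 4 → ℝ) (q : ℝ)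
    (μ : Fin 4) (x : Fin 4 → ℝ) : ℝ :=
  ∑ ν : Fin 4, (g x)⁻¹ μ ν * pDown S A q ν x

set_option maxHeartbeats 4000000
set_option maxRecDepth 100000

section helpers
variable {ι : Type*} [Fintype ι] [DecidableEq ι]

lemma pd_eq_zero_of_const {f : (ι → ℝ) → ℝ} {c : ℝ} (h : ∀ z, f z = c) (μ : ι) (x : ι → ℝ) :
    pd f μ x = 0 := by
  have hf : f = fun _ => c := funext h
  simp [pd, hf]

lemma pd_mul {f h : (ι → ℝ) → ℝ} {x : ι → ℝ} (hf : DifferentiableAt ℝ f x)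
    (hh : DifferentiableAt ℝ h x) (μ : ι) :
    pd (fun z => f z * h z) μ x = pd f μ x * h x + f x * pd h μ x := by
  simp only [pd, fderiv_fun_mul hf hh]
  simp only [ContinuousLinearMap.add_apply, ContinuousLinearMap.smul_apply, smul_eq_mul]
  ring

lemma pd_sub {f h : (ι → ℝ) → ℝ} {x : ι → ℝ} (hf : DifferentiableAt ℝ f x)
    (hh : DifferentiableAt ℝ h x) (μ : ι) :
    pd (fun z => f z - h z) μ x = pd f μ x - pd h μ x := by
  simp [pd, fderiv_fun_sub hf hh]

lemma pd_const_mul {f : (ι → ℝ) → ℝ} {x : ι → ℝ} (hf : DifferentiableAt ℝ f x) (c : ℝ) (μ : ι) :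
    pd (fun z => c * f z) μ x = c * pd f μ x := by
  simp [pd, fderiv_const_mul hf c]

lemma pd_sum {κ : Type*} {s : Finset κ} {f : κ → (ι → ℝ) → ℝ} {x : ι → ℝ}
    (hf : ∀ k ∈ s, DifferentiableAt ℝ (f k) x) (μ : ι) :
    pd (fun z => ∑ k ∈ s, f k z) μ x = ∑ k ∈ s, pd (f k) μ x := by
  simp [pd, fderiv_fun_sum hf]

lemma contDiff_pd {f : (ι → ℝ) → ℝ} (hf : ContDiff ℝ (⊤ : ℕ∞) f) (μ : ι) :
    ContDiff ℝ (⊤ : ℕ∞) (fun x => pd f μ x) :=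
  (hf.fderiv_right (by exact_mod_cast le_top : ((⊤:ℕ∞) : WithTop ℕ∞) + 1 ≤ ((⊤:ℕ∞) : WithTop ℕ∞))).clm_apply contDiff_const

lemma contDiff_det {M : (ι → ℝ) → Matrix ι ι ℝ}
    (h : ∀ i j, ContDiff ℝ (⊤ : ℕ∞) fun x => M x i j) :
    ContDiff ℝ (⊤ : ℕ∞) fun x => (M x).det := by
  have e : (fun x => (M x).det)
      = fun x => ∑ σ : Equiv.Perm ι, (Equiv.Perm.sign σ : ℤ) * ∏ i, M x (σ i) i := by
    funext x; rw [Matrix.det_apply']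
  rw [e]
  exact ContDiff.sum fun σ _ => contDiff_const.mul (contDiff_prod fun i _ => h (σ i) i)

lemma contDiff_inv_entry {g : (ι → ℝ) → Matrix ι ι ℝ}
    (hg : ∀ i j, ContDiff ℝ (⊤ : ℕ∞) fun x => g x i j)
    (hdet : ∀ x, IsUnit (g x).det) (μ ν : ι) :
    ContDiff ℝ (⊤ : ℕ∞) fun x => (g x)⁻¹ μ ν := by
  have hadj : ContDiff ℝ (⊤ : ℕ∞) fun x => (g x).adjugate μ ν := by
    have e : (fun x => (g x).adjugate μ ν)
        = fun x => ((g x).updateRow ν (Pi.single μ 1)).det := by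
      funext x; rw [Matrix.adjugate_apply]
    rw [e]
    refine contDiff_det fun i j => ?_
    rcases eq_or_ne i ν with h | h
    · simpa [Matrix.updateRow_apply, h] using (contDiff_const :
        ContDiff ℝ (⊤ : ℕ∞) fun _ : ι → ℝ => (Pi.single μ 1 : ι → ℝ) j)
    · simpa [Matrix.updateRow_apply, h] using hg i j
  have hdet' : ContDiff ℝ (⊤ : ℕ∞) fun x => (g x).det := contDiff_det hg
  have e : (fun x => (g x)⁻¹ μ ν) = fun x => ((g x).det)⁻¹ * (g x).adjugate μ ν := by
    funext x
    rw [Matrix.inv_def, Ring.inverse_eq_inv]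
    simp [Matrix.smul_apply]
  rw [e]
  exact (hdet'.inv fun x => (hdet x).ne_zero).mul hadj

lemma pd_comm {f : (ι → ℝ) → ℝ} (hf : ContDiff ℝ (⊤ : ℕ∞) f) (a b : ι) (x : ι → ℝ) :
    pd (fun z => pd f a z) b x = pd (fun z => pd f b z) a x := by
  have hd : DifferentiableAt ℝ (fderiv ℝ f) x :=
    (((hf.fderiv_right (m := (⊤:ℕ∞)) (by exact_mod_cast le_top : ((⊤:ℕ∞) : WithTop ℕ∞) + 1 ≤ ((⊤:ℕ∞) : WithTop ℕ∞)))).differentiable (by decide)).differentiableAt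
  have key : ∀ v w : ι → ℝ, fderiv ℝ (fun z => fderiv ℝ f z v) x w
      = fderiv ℝ (fderiv ℝ f) x w v := by
    intro v w
    rw [fderiv_clm_apply hd (differentiableAt_const v)]
    simp
  have hsym := (hf.contDiffAt (x := x)).isSymmSndFDerivAt (by rw [minSmoothness_of_isRCLikeNormedField]; exact WithTop.coe_le_coe.mpr (le_top : (2:ℕ∞) ≤ ⊤))
  simp only [pd]
  rw [key, key]
  exact hsym _ _
end helpers

/-- if g^{μν} p_μ p_ν = ε m² identically, then
p^α_{;β} p^β = q g^{αγ} F_{γβ} p^β. -/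
theorem momentum_lorentz_force_identity
    (g : (Fin 4 → ℝ) → Matrix (Fin 4) (Fin 4) ℝ)
    (S : (Fin 4 → ℝ) → ℝ) (A : (Fin 4 → ℝ) → Fin 4 → ℝ) (q : ℝ)
    (hg : ∀ μ ν, ContDiff ℝ (⊤ : ℕ∞) (fun x => g x μ ν))
    (hgsymm : ∀ x, (g x).IsSymm)
    (hginv : ∀ x, IsUnit (g x).det)
    (hS : ContDiff ℝ (⊤ : ℕ∞) S)
    (hA : ∀ μ, ContDiff ℝ (⊤ : ℕ∞) (fun x => A x μ))
    (ε m : ℝ)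
    (hmass : ∀ x : Fin 4 → ℝ,
      ∑ μ : Fin 4, ∑ ν : Fin 4, (g x)⁻¹ μ ν * pDown S A q μ x * pDown S A q ν x = ε * m^2) :
    ∀ (x : Fin 4 → ℝ) (α : Fin 4),
      ∑ b : Fin 4, (pd (fun z => pUp g S A q α z) b x
          + ∑ γ : Fin 4, Chr g α b γ x * pUp g S A q γ x) * pUp g S A q b x
      = q * ∑ γ : Fin 4, (g x)⁻¹ α γ * ∑ b : Fin 4, Fem A γ b x * pUp g S A q b x := by
  intro x α
  classical
  have hgic : ∀ i j, ContDiff ℝ (⊤ : ℕ∞) fun z => (g z)⁻¹ i j := contDiff_inv_entry hg hginv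
  have dgi : ∀ i j, DifferentiableAt ℝ (fun z => (g z)⁻¹ i j) x :=
    fun i j => ((hgic i j).differentiable (by decide)).differentiableAt
  have dgg : ∀ i j, DifferentiableAt ℝ (fun z => g z i j) x :=
    fun i j => ((hg i j).differentiable (by decide)).differentiableAt
  have hpc : ∀ ν, ContDiff ℝ (⊤ : ℕ∞) (pDown S A q ν) := by
    intro ν
    have e : pDown S A q ν = fun z => pd S ν z - q * A z ν := rfl
    rw [e]
    exact (contDiff_pd hS ν).sub (contDiff_const.mul (hA ν))
  have dp : ∀ ν, DifferentiableAt ℝ (pDown S A q ν) x :=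
    fun ν => ((hpc ν).differentiable (by decide)).differentiableAt
  -- symmetry of the inverse metric
  have hsym : ∀ i j : Fin 4, (g x)⁻¹ i j = (g x)⁻¹ j i := by
    intro i j
    have h1 : Matrix.transpose ((g x)⁻¹) = (g x)⁻¹ := by
      rw [Matrix.transpose_nonsing_inv, (hgsymm x).eq]
    calc (g x)⁻¹ i j = Matrix.transpose ((g x)⁻¹) j i := rfl
      _ = (g x)⁻¹ j i := by rw [h1]
  -- derivative of the inverse metric
  have hF1 : ∀ (c i j : Fin 4), pd (fun z => (g z)⁻¹ i j) c x
      = -∑ a : Fin 4, ∑ b : Fin 4, (g x)⁻¹ i a * pd (fun z => g z a b) c x * (g x)⁻¹ b j := by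
    intro c i j
    have key : ∀ b : Fin 4, ∑ k : Fin 4, pd (fun z => (g z)⁻¹ i k) c x * g x k b
        = -∑ k : Fin 4, (g x)⁻¹ i k * pd (fun z => g z k b) c x := by
      intro b
      have h0 : pd (fun z => ∑ k : Fin 4, (g z)⁻¹ i k * g z k b) c x = 0 :=
        pd_eq_zero_of_const (c := if i = b then 1 else 0) (fun z => by
          rw [← Matrix.mul_apply, Matrix.nonsing_inv_mul _ (hginv z), Matrix.one_apply]) c x
      rw [pd_sum (fun k _ => (dgi i k).fun_mul (dgg k b)) c] at h0
      have h1 : ∑ k : Fin 4, (pd (fun z => (g z)⁻¹ i k) c x * g x k b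
          + (g x)⁻¹ i k * pd (fun z => g z k b) c x) = 0 := by
        rw [← h0]
        exact Finset.sum_congr rfl fun k _ => (pd_mul (dgi i k) (dgg k b) c).symm
      rw [Finset.sum_add_distrib] at h1
      linarith
    have hdelta : ∀ k : Fin 4, ∑ b : Fin 4, g x k b * (g x)⁻¹ b j = if k = j then 1 else 0 := by
      intro k
      rw [← Matrix.mul_apply, Matrix.mul_nonsing_inv _ (hginv x), Matrix.one_apply]
    have e1 : pd (fun z => (g z)⁻¹ i j) c x
        = ∑ k : Fin 4, pd (fun z => (g z)⁻¹ i k) c x * ∑ b : Fin 4, g x k b * (g x)⁻¹ b j := by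
      simp only [hdelta, mul_ite, mul_one, mul_zero]
      simp
    rw [e1]
    have k0 := key 0; have k1 := key 1; have k2 := key 2; have k3 := key 3
    simp only [Fin.sum_univ_four] at k0 k1 k2 k3 ⊢
    linear_combination (g x)⁻¹ 0 j * k0 + (g x)⁻¹ 1 j * k1 + (g x)⁻¹ 2 j * k2 + (g x)⁻¹ 3 j * k3
  -- antisymmetrized derivative of the momentum gives the field strength
  have hF2 : ∀ γ b : Fin 4, q * Fem A γ b x
      = pd (pDown S A q γ) b x - pd (pDown S A q b) γ x := by
    intro γ b
    have e1 : ∀ μ ν : Fin 4, pd (pDown S A q μ) ν x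
        = pd (fun z => pd S μ z) ν x - q * pd (fun z => A z μ) ν x := by
      intro μ ν
      have e : pDown S A q μ = fun z => pd S μ z - q * A z μ := rfl
      rw [e, pd_sub ((contDiff_pd hS μ).differentiable (by decide)).differentiableAt
          ((contDiff_const.mul (hA μ)).differentiable (by decide)).differentiableAt,
        pd_const_mul ((hA μ).differentiable (by decide)).differentiableAt q]
    rw [e1, e1, Fem, pd_comm hS γ b]
    ring
  -- differentiating the mass-shell condition
  have hF3 : ∀ c : Fin 4, ∑ μ : Fin 4, ∑ ν : Fin 4,
      (pd (fun z => (g z)⁻¹ μ ν) c x * pDown S A q μ x * pDown S A q ν x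
        + (g x)⁻¹ μ ν * pd (pDown S A q μ) c x * pDown S A q ν x
        + (g x)⁻¹ μ ν * pDown S A q μ x * pd (pDown S A q ν) c x) = 0 := by
    intro c
    have hd2 : ∀ μ ν : Fin 4,
        DifferentiableAt ℝ (fun z => (g z)⁻¹ μ ν * pDown S A q μ z * pDown S A q ν z) x :=
      fun μ ν => ((dgi μ ν).mul (dp μ)).mul (dp ν)
    have e2 : ∀ μ ν : Fin 4,
        pd (fun z => (g z)⁻¹ μ ν * pDown S A q μ z * pDown S A q ν z) c x
        = pd (fun z => (g z)⁻¹ μ ν) c x * pDown S A q μ x * pDown S A q ν x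
          + (g x)⁻¹ μ ν * pd (pDown S A q μ) c x * pDown S A q ν x
          + (g x)⁻¹ μ ν * pDown S A q μ x * pd (pDown S A q ν) c x := by
      intro μ ν
      have A1 := pd_mul (f := fun z => (g z)⁻¹ μ ν * pDown S A q μ z)
        (h := fun z => pDown S A q ν z) ((dgi μ ν).mul (dp μ)) (dp ν) c
      have A2 := pd_mul (f := fun z => (g z)⁻¹ μ ν) (h := fun z => pDown S A q μ z)
        (dgi μ ν) (dp μ) c
      rw [A1, A2]; ring
    have h1 : pd (fun z => ∑ μ : Fin 4, ∑ ν : Fin 4,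
        (g z)⁻¹ μ ν * pDown S A q μ z * pDown S A q ν z) c x
        = ∑ μ : Fin 4, ∑ ν : Fin 4,
          pd (fun z => (g z)⁻¹ μ ν * pDown S A q μ z * pDown S A q ν z) c x := by
      rw [pd_sum (fun μ _ => DifferentiableAt.fun_sum (fun ν _ => hd2 μ ν)) c]
      exact Finset.sum_congr rfl fun μ _ => pd_sum (fun ν _ => hd2 μ ν) c
    calc ∑ μ : Fin 4, ∑ ν : Fin 4,
        (pd (fun z => (g z)⁻¹ μ ν) c x * pDown S A q μ x * pDown S A q ν x
          + (g x)⁻¹ μ ν * pd (pDown S A q μ) c x * pDown S A q ν x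
          + (g x)⁻¹ μ ν * pDown S A q μ x * pd (pDown S A q ν) c x)
        = ∑ μ : Fin 4, ∑ ν : Fin 4,
          pd (fun z => (g z)⁻¹ μ ν * pDown S A q μ z * pDown S A q ν z) c x :=
        Finset.sum_congr rfl fun μ _ => Finset.sum_congr rfl fun ν _ => (e2 μ ν).symm
      _ = pd (fun z => ∑ μ : Fin 4, ∑ ν : Fin 4,
          (g z)⁻¹ μ ν * pDown S A q μ z * pDown S A q ν z) c x := h1.symm
      _ = 0 := pd_eq_zero_of_const hmass c x
  -- derivative of the raised momentum
  have hF5 : ∀ b : Fin 4, pd (fun z => pUp g S A q α z) b x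
      = ∑ ν : Fin 4, (pd (fun z => (g z)⁻¹ α ν) b x * pDown S A q ν x
          + (g x)⁻¹ α ν * pd (pDown S A q ν) b x) := by
    intro b
    have e0 : (fun z => pUp g S A q α z)
        = fun z => ∑ ν : Fin 4, (g z)⁻¹ α ν * pDown S A q ν z := rfl
    rw [e0, pd_sum (fun ν _ => (dgi α ν).fun_mul (dp ν)) b]
    exact Finset.sum_congr rfl fun ν _ =>
      pd_mul (f := fun z => (g z)⁻¹ α ν) (h := fun z => pDown S A q ν z) (dgi α ν) (dp ν) b
  -- assemble
  have h0 := hF3 0; have h1 := hF3 1; have h2 := hF3 2; have h3 := hF3 3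
  simp only [hF1, Fin.sum_univ_four] at h0 h1 h2 h3
  simp only [hF5]
  simp (config := { maxSteps := 10000000 }) only [hF1, Chr, pUp]
  simp (config := { maxSteps := 10000000 }) only [Fin.sum_univ_four]
  rw [hsym 1 0, hsym 2 0, hsym 2 1, hsym 3 0, hsym 3 1, hsym 3 2] at h0 h1 h2 h3 ⊢
  linear_combination (norm := ring1)
      (1/2 : ℝ) * (g x)⁻¹ α 0 * h0
      + (1/2 : ℝ) * (g x)⁻¹ α 1 * h1
      + (1/2 : ℝ) * (g x)⁻¹ α 2 * h2
      + (1/2 : ℝ) * (g x)⁻¹ α 3 * h3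
      + (-((g x)⁻¹ α 0 * ((g x)⁻¹ 0 0 * pDown S A q 0 x + (g x)⁻¹ 0 1 * pDown S A q 1 x + (g x)⁻¹ 0 2 * pDown S A q 2 x + (g x)⁻¹ 0 3 * pDown S A q 3 x))) * hF2 0 0
      + (-((g x)⁻¹ α 0 * ((g x)⁻¹ 0 1 * pDown S A q 0 x + (g x)⁻¹ 1 1 * pDown S A q 1 x + (g x)⁻¹ 1 2 * pDown S A q 2 x + (g x)⁻¹ 1 3 * pDown S A q 3 x))) * hF2 0 1
      + (-((g x)⁻¹ α 0 * ((g x)⁻¹ 0 2 * pDown S A q 0 x + (g x)⁻¹ 1 2 * pDown S A q 1 x + (g x)⁻¹ 2 2 * pDown S A q 2 x + (g x)⁻¹ 2 3 * pDown S A q 3 x))) * hF2 0 2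
      + (-((g x)⁻¹ α 0 * ((g x)⁻¹ 0 3 * pDown S A q 0 x + (g x)⁻¹ 1 3 * pDown S A q 1 x + (g x)⁻¹ 2 3 * pDown S A q 2 x + (g x)⁻¹ 3 3 * pDown S A q 3 x))) * hF2 0 3
      + (-((g x)⁻¹ α 1 * ((g x)⁻¹ 0 0 * pDown S A q 0 x + (g x)⁻¹ 0 1 * pDown S A q 1 x + (g x)⁻¹ 0 2 * pDown S A q 2 x + (g x)⁻¹ 0 3 * pDown S A q 3 x))) * hF2 1 0
      + (-((g x)⁻¹ α 1 * ((g x)⁻¹ 0 1 * pDown S A q 0 x + (g x)⁻¹ 1 1 * pDown S A q 1 x + (g x)⁻¹ 1 2 * pDown S A q 2 x + (g x)⁻¹ 1 3 * pDown S A q 3 x))) * hF2 1 1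
      + (-((g x)⁻¹ α 1 * ((g x)⁻¹ 0 2 * pDown S A q 0 x + (g x)⁻¹ 1 2 * pDown S A q 1 x + (g x)⁻¹ 2 2 * pDown S A q 2 x + (g x)⁻¹ 2 3 * pDown S A q 3 x))) * hF2 1 2
      + (-((g x)⁻¹ α 1 * ((g x)⁻¹ 0 3 * pDown S A q 0 x + (g x)⁻¹ 1 3 * pDown S A q 1 x + (g x)⁻¹ 2 3 * pDown S A q 2 x + (g x)⁻¹ 3 3 * pDown S A q 3 x))) * hF2 1 3
      + (-((g x)⁻¹ α 2 * ((g x)⁻¹ 0 0 * pDown S A q 0 x + (g x)⁻¹ 0 1 * pDown S A q 1 x + (g x)⁻¹ 0 2 * pDown S A q 2 x + (g x)⁻¹ 0 3 * pDown S A q 3 x))) * hF2 2 0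
      + (-((g x)⁻¹ α 2 * ((g x)⁻¹ 0 1 * pDown S A q 0 x + (g x)⁻¹ 1 1 * pDown S A q 1 x + (g x)⁻¹ 1 2 * pDown S A q 2 x + (g x)⁻¹ 1 3 * pDown S A q 3 x))) * hF2 2 1
      + (-((g x)⁻¹ α 2 * ((g x)⁻¹ 0 2 * pDown S A q 0 x + (g x)⁻¹ 1 2 * pDown S A q 1 x + (g x)⁻¹ 2 2 * pDown S A q 2 x + (g x)⁻¹ 2 3 * pDown S A q 3 x))) * hF2 2 2
      + (-((g x)⁻¹ α 2 * ((g x)⁻¹ 0 3 * pDown S A q 0 x + (g x)⁻¹ 1 3 * pDown S A q 1 x + (g x)⁻¹ 2 3 * pDown S A q 2 x + (g x)⁻¹ 3 3 * pDown S A q 3 x))) * hF2 2 3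
      + (-((g x)⁻¹ α 3 * ((g x)⁻¹ 0 0 * pDown S A q 0 x + (g x)⁻¹ 0 1 * pDown S A q 1 x + (g x)⁻¹ 0 2 * pDown S A q 2 x + (g x)⁻¹ 0 3 * pDown S A q 3 x))) * hF2 3 0
      + (-((g x)⁻¹ α 3 * ((g x)⁻¹ 0 1 * pDown S A q 0 x + (g x)⁻¹ 1 1 * pDown S A q 1 x + (g x)⁻¹ 1 2 * pDown S A q 2 x + (g x)⁻¹ 1 3 * pDown S A q 3 x))) * hF2 3 1
      + (-((g x)⁻¹ α 3 * ((g x)⁻¹ 0 2 * pDown S A q 0 x + (g x)⁻¹ 1 2 * pDown S A q 1 x + (g x)⁻¹ 2 2 * pDown S A q 2 x + (g x)⁻¹ 2 3 * pDown S A q 3 x))) * hF2 3 2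
      + (-((g x)⁻¹ α 3 * ((g x)⁻¹ 0 3 * pDown S A q 0 x + (g x)⁻¹ 1 3 * pDown S A q 1 x + (g x)⁻¹ 2 3 * pDown S A q 2 x + (g x)⁻¹ 3 3 * pDown S A q 3 x))) * hF2 3 3
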